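/- arXiv:1901.03444 — 7 statements merged into one kernel-verified Lean document; each statement's English description precedes it below -/
import Mathlib

section
/- Let 1 ≤ p < ∞ and let U, V be real numbers with U·V ≤ 0. Define g(t) = |U − tV|^p + |U − V|^{p−2}(U − V)·V·|t|^p for t ∈ ℝ. Then for all t ∈ ℝ, g(t) ≤ g(1) = |U − V|^{p−2}(U − V)·U. -/
open Real Set

private lemma key_ineq {p a b s : ℝ} (hp : 1 ≤ p) (ha : 0 ≤ a) (hb : 0 ≤ b)
    (hs : 0 ≤ s) :
    (a + s * b) ^ p ≤ (a + b) ^ (p - 1) * a + (a + b) ^ (p - 1) * (b * s ^ p) := by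
  have hp0 : 0 < p := lt_of_lt_of_le one_pos hp
  rcases eq_or_lt_of_le (by positivity : (0:ℝ) ≤ a + b) with hab | hab
  · have ha0 : a = 0 := by nlinarith
    have hb0 : b = 0 := by nlinarith
    simp [ha0, hb0, Real.zero_rpow hp0.ne']
  · have hconv := convexOn_rpow hp
    have h := hconv.2 (mem_Ici.mpr (zero_le_one)) (mem_Ici.mpr hs)
      (by positivity : (0:ℝ) ≤ a / (a + b)) (by positivity : (0:ℝ) ≤ b / (a + b))
      (by field_simp)
    simp only [smul_eq_mul, mul_one, Real.one_rpow] at h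
    have hmix : a / (a + b) + b / (a + b) * s = (a + s * b) / (a + b) := by
      field_simp
    rw [hmix, Real.div_rpow (by positivity) hab.le] at h
    have habp : 0 < (a + b) ^ p := Real.rpow_pos_of_pos hab p
    have h2 : (a + s * b) ^ p ≤ (a + b) ^ p * (a / (a + b)) +
        (a + b) ^ p * (b / (a + b) * s ^ p) := by
      rw [div_le_iff₀ habp] at h
      calc (a + s * b) ^ p ≤ (a / (a + b) + b / (a + b) * s ^ p) * (a + b) ^ p := h
        _ = (a + b) ^ p * (a / (a + b)) + (a + b) ^ p * (b / (a + b) * s ^ p) := by ring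
    have hsub : (a + b) ^ p / (a + b) = (a + b) ^ (p - 1) := by
      rw [← Real.rpow_sub_one hab.ne']
    calc (a + s * b) ^ p ≤ _ := h2
      _ = (a + b) ^ (p - 1) * a + (a + b) ^ (p - 1) * (b * s ^ p) := by
        rw [← hsub]; field_simp

theorem stmt0 (p U V : ℝ) (hp : 1 ≤ p) (hUV : U * V ≤ 0) :
    (∀ t : ℝ, |U - t * V| ^ p + |U - V| ^ (p - 2) * (U - V) * V * |t| ^ p ≤
      |U - 1 * V| ^ p + |U - V| ^ (p - 2) * (U - V) * V * |(1 : ℝ)| ^ p) ∧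
    |U - 1 * V| ^ p + |U - V| ^ (p - 2) * (U - V) * V * |(1 : ℝ)| ^ p =
      |U - V| ^ (p - 2) * (U - V) * U := by
  have hp0 : 0 < p := lt_of_lt_of_le one_pos hp
  set a := |U| with ha_def
  set b := |V| with hb_def
  have ha : 0 ≤ a := abs_nonneg U
  have hb : 0 ≤ b := abs_nonneg V
  -- |U - V| = a + b
  have habs : |U - V| = a + b := by
    rcases mul_nonpos_iff.mp hUV with ⟨hU, hV⟩ | ⟨hU, hV⟩
    · rw [ha_def, hb_def, abs_of_nonneg hU, abs_of_nonpos hV,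
        abs_of_nonneg (by linarith)]; ring
    · rw [ha_def, hb_def, abs_of_nonpos hU, abs_of_nonneg hV,
        abs_of_nonpos (by linarith)]; ring
  have hUVv : (U - V) * V = -((a + b) * b) := by
    rcases mul_nonpos_iff.mp hUV with ⟨hU, hV⟩ | ⟨hU, hV⟩
    · rw [ha_def, hb_def, abs_of_nonneg hU, abs_of_nonpos hV]; ring
    · rw [ha_def, hb_def, abs_of_nonpos hU, abs_of_nonneg hV]; ring
  have hUVu : (U - V) * U = (a + b) * a := by
    rcases mul_nonpos_iff.mp hUV with ⟨hU, hV⟩ | ⟨hU, hV⟩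
    · rw [ha_def, hb_def, abs_of_nonneg hU, abs_of_nonpos hV]; ring
    · rw [ha_def, hb_def, abs_of_nonpos hU, abs_of_nonneg hV]; ring
  -- key rpow identities
  have hcv : |U - V| ^ (p - 2) * (U - V) * V = -((a + b) ^ (p - 1) * b) := by
    rcases eq_or_lt_of_le (by positivity : (0:ℝ) ≤ a + b) with hab | hab
    · have hb0 : b = 0 := by nlinarith
      have : V = 0 := abs_eq_zero.mp (hb_def ▸ hb0)
      simp [this, hb0]
    · rw [mul_assoc, hUVv, habs]
      rw [show (p - 1) = (p - 2) + 1 by ring, Real.rpow_add_one hab.ne']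
      ring
  have hcu : |U - V| ^ (p - 2) * (U - V) * U = (a + b) ^ (p - 1) * a := by
    rcases eq_or_lt_of_le (by positivity : (0:ℝ) ≤ a + b) with hab | hab
    · have ha0 : a = 0 := by nlinarith
      have : U = 0 := abs_eq_zero.mp (ha_def ▸ ha0)
      simp [this, ha0]
    · rw [mul_assoc, hUVu, habs]
      rw [show (p - 1) = (p - 2) + 1 by ring, Real.rpow_add_one hab.ne']
      ring
  have habsp : |U - 1 * V| ^ p = (a + b) ^ p := by rw [one_mul, habs]
  have hpow : (a + b) ^ p = (a + b) ^ (p - 1) * (a + b) := by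
    rcases eq_or_lt_of_le (by positivity : (0:ℝ) ≤ a + b) with hab | hab
    · rw [← hab, Real.zero_rpow hp0.ne', mul_zero]
    · rw [← Real.rpow_add_one hab.ne']; ring_nf
  constructor
  · intro t
    rw [habsp, hcv]
    simp only [abs_one, Real.one_rpow, mul_one]
    have h1 : |U - t * V| ≤ a + |t| * b := by
      calc |U - t * V| ≤ |U| + |t * V| := abs_sub _ _
        _ = a + |t| * b := by rw [abs_mul]
    have h2 : |U - t * V| ^ p ≤ (a + |t| * b) ^ p :=
      Real.rpow_le_rpow (abs_nonneg _) h1 hp0.le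
    have h3 := key_ineq hp ha hb (abs_nonneg t) (s := |t|)
    have h4 : (a + b) ^ (p - 1) * a = (a + b) ^ p - (a + b) ^ (p - 1) * b := by
      rw [hpow]; ring
    nlinarith [h2, h3]
  · rw [habsp, hcv, hcu]
    simp only [abs_one, Real.one_rpow, mul_one]
    rw [hpow]; ring
end

section
/- Let 1 < p < ∞. There exists a constant c_p > 0 such that for all real numbers a, b: |a − b|^p ≤ |a|^p + |b|^p + c_p·(|a|^2 + |b|^2)^{(p−2)/2}·|a·b|. -/
open Real

lemma aux_bern (p : ℝ) (hp : 1 < p) (s t : ℝ) (hs : 0 < s) (ht : 0 ≤ t) :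
    (s + t) ^ p ≤ s ^ p + p * (s + t) ^ (p - 1) * t := by
  have hst : 0 < s + t := by linarith
  have hz1 : -1 ≤ -(t / (s + t)) := by
    have : t / (s + t) ≤ 1 := by
      rw [div_le_one hst]; linarith
    linarith
  have hb := one_add_mul_self_le_rpow_one_add hz1 hp.le
  have h1 : (1 : ℝ) + -(t / (s + t)) = s / (s + t) := by field_simp; ring
  rw [h1] at hb
  have h2 : (s / (s + t)) ^ p = s ^ p / (s + t) ^ p := Real.div_rpow hs.le hst.le p
  rw [h2] at hb
  have hpow : (0:ℝ) < (s + t) ^ p := Real.rpow_pos_of_pos hst p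
  have h3 : (1 + p * -(t / (s + t))) * (s + t) ^ p ≤ s ^ p := by
    exact (le_div_iff₀ hpow).mp hb
  have h4 : (s + t) ^ p / (s + t) = (s + t) ^ (p - 1) := by
    rw [Real.rpow_sub hst, Real.rpow_one]
  have h5 : (1 + p * -(t / (s + t))) * (s + t) ^ p
      = (s + t) ^ p - p * t * ((s + t) ^ p / (s + t)) := by
    field_simp
    ring
  rw [h5, h4] at h3
  linarith

lemma aux_key (p : ℝ) (hp : 1 < p) (s t : ℝ) (ht : 0 ≤ t) (hts : t ≤ s) :
    (s + t) ^ p ≤ s ^ p + t ^ p +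
      p * 2 ^ p * (s ^ (2 : ℝ) + t ^ (2 : ℝ)) ^ ((p - 2) / 2) * (s * t) := by
  have hp0 : 0 < p := by linarith
  rcases eq_or_lt_of_le ht with rfl | ht'
  · simp [Real.zero_rpow hp0.ne']
  have hs : 0 < s := lt_of_lt_of_le ht' hts
  have e2 : ∀ x : ℝ, 0 ≤ x → x ^ (2 : ℝ) = x * x := by
    intro x hx
    rw [show (2:ℝ) = ((2:ℕ):ℝ) by norm_num, Real.rpow_natCast]; ring
  rw [e2 s hs.le, e2 t ht]
  set e : ℝ := (p - 2) / 2 with he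
  have hsum : 0 < s * s + t * t := by nlinarith
  have hE : 0 < (s * s + t * t) ^ e := Real.rpow_pos_of_pos hsum e
  -- s ^ (p-2) = (s*s) ^ e
  have hss : s ^ (p - 2) = (s * s) ^ e := by
    rw [show s * s = s ^ (2:ℝ) from (e2 s hs.le).symm,
      ← Real.rpow_mul hs.le, show (2:ℝ) * e = p - 2 by rw [he]; ring]
  have hs2 : 0 < s * s := by nlinarith
  -- key comparison: s ^ (p-2) ≤ 2 * (s*s+t*t)^e
  have h4 : s ^ (p - 2) ≤ 2 * (s * s + t * t) ^ e := by
    rw [hss]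
    rcases le_total p 2 with hp2 | hp2
    · have he0 : e ≤ 0 := by rw [he]; linarith
      have hle : s * s + t * t ≤ 2 * (s * s) := by nlinarith
      have h5 : (2 * (s * s)) ^ e ≤ (s * s + t * t) ^ e :=
        Real.rpow_le_rpow_of_nonpos hsum hle he0
      have h6 : (2 * (s * s)) ^ e = 2 ^ e * (s * s) ^ e :=
        Real.mul_rpow (by norm_num) hs2.le
      have h7 : (1:ℝ)/2 ≤ 2 ^ e := by
        have : (2:ℝ) ^ (-1:ℝ) ≤ 2 ^ e :=
          Real.rpow_le_rpow_of_exponent_le (by norm_num) (by rw [he]; linarith)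
        rw [Real.rpow_neg_one] at this; linarith
      have h8 : 0 < (s * s) ^ e := Real.rpow_pos_of_pos hs2 e
      nlinarith
    · have he0 : 0 ≤ e := by rw [he]; linarith
      have h5 : (s * s) ^ e ≤ (s * s + t * t) ^ e :=
        Real.rpow_le_rpow hs2.le (by nlinarith) he0
      linarith
  -- combine
  have hb := aux_bern p hp s t hs ht
  have h2 : (s + t) ^ (p - 1) ≤ 2 ^ (p - 1) * s ^ (p - 1) := by
    have : (s + t) ^ (p - 1) ≤ (2 * s) ^ (p - 1) :=
      Real.rpow_le_rpow (by linarith) (by linarith) (by linarith)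
    rwa [Real.mul_rpow (by norm_num) hs.le] at this
  have h3 : s ^ (p - 1) = s ^ (p - 2) * s := by
    rw [show p - 1 = (p - 2) + 1 by ring, Real.rpow_add hs, Real.rpow_one]
  have h2p : (2:ℝ) ^ p = 2 ^ (p - 1) * 2 := by
    rw [show p = (p - 1) + 1 by ring, Real.rpow_add (by norm_num : (0:ℝ) < 2), Real.rpow_one]
    ring_nf
  have hpow1 : 0 < (2:ℝ) ^ (p - 1) := Real.rpow_pos_of_pos (by norm_num) _
  have htp : 0 ≤ t ^ p := Real.rpow_nonneg ht p
  have hsp2 : 0 < s ^ (p - 2) := Real.rpow_pos_of_pos hs _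
  have c1 : p * (s + t) ^ (p - 1) * t ≤ p * (2 ^ (p - 1) * s ^ (p - 1)) * t :=
    mul_le_mul_of_nonneg_right (mul_le_mul_of_nonneg_left h2 hp0.le) ht
  have c2 : p * (2 ^ (p - 1) * s ^ (p - 1)) * t = p * 2 ^ (p - 1) * (s ^ (p - 2) * (s * t)) := by
    rw [h3]; ring
  have c3 : s ^ (p - 2) * (s * t) ≤ (2 * (s * s + t * t) ^ e) * (s * t) :=
    mul_le_mul_of_nonneg_right h4 (by positivity)
  have c4 : p * 2 ^ (p - 1) * (s ^ (p - 2) * (s * t))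
      ≤ p * 2 ^ (p - 1) * ((2 * (s * s + t * t) ^ e) * (s * t)) :=
    mul_le_mul_of_nonneg_left c3 (by positivity)
  have c5 : p * 2 ^ (p - 1) * ((2 * (s * s + t * t) ^ e) * (s * t))
      = p * 2 ^ p * (s * s + t * t) ^ e * (s * t) := by rw [h2p]; ring
  linarith

theorem stmt1 (p : ℝ) (hp : 1 < p) :
    ∃ c : ℝ, 0 < c ∧ ∀ a b : ℝ,
      |a - b| ^ p ≤ |a| ^ p + |b| ^ p +
        c * (|a| ^ (2 : ℝ) + |b| ^ (2 : ℝ)) ^ ((p - 2) / 2) * |a * b| := by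
  have hp0 : (0:ℝ) < p := by linarith
  refine ⟨p * 2 ^ p, by positivity, fun a b => ?_⟩
  have habs : |a - b| ≤ |a| + |b| := by
    rw [sub_eq_add_neg]
    exact (abs_add_le a (-b)).trans (by rw [abs_neg])
  rw [abs_mul]
  rcases le_total |b| |a| with h | h
  · have h1 : |a - b| ^ p ≤ (|a| + |b|) ^ p :=
      Real.rpow_le_rpow (abs_nonneg _) habs hp0.le
    have h2 := aux_key p hp |a| |b| (abs_nonneg b) h
    linarith
  · have h1 : |a - b| ^ p ≤ (|b| + |a|) ^ p :=
      Real.rpow_le_rpow (abs_nonneg _) (by linarith) hp0.le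
    have h2 := aux_key p hp |b| |a| (abs_nonneg a) h
    rw [show |a| ^ (2:ℝ) + |b| ^ (2:ℝ) = |b| ^ (2:ℝ) + |a| ^ (2:ℝ) by ring,
      show |a| * |b| = |b| * |a| by ring]
    linarith
end

section
/- Let p > 2 and let a, b be real numbers with a·b ≤ 0. Then |a − b|^{p−2}(a − b)·a ≥ |a|^p − (p − 1)·|a|^{p−2}·b·a. -/
open Real

lemma key2 (p a b : ℝ) (hp : 2 < p) (ha : 0 < a) (hb : b ≤ 0) :
    a ^ p - (p - 1) * a ^ (p - 2) * b * a ≤ (a - b) ^ (p - 2) * (a - b) * a := by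
  have hs : (0:ℝ) ≤ -b / a := div_nonneg (by linarith) ha.le
  have hbern : 1 + (p - 1) * (-b / a) ≤ (1 + (-b / a)) ^ (p - 1) :=
    one_add_mul_self_le_rpow_one_add (by linarith) (by linarith)
  have hab : (0:ℝ) < a - b := by linarith
  have h1 : a * (1 + (-b / a)) = a - b := by field_simp; ring
  have h2 : (a * (1 + (-b / a))) ^ (p - 1) = a ^ (p - 1) * (1 + (-b / a)) ^ (p - 1) :=
    Real.mul_rpow ha.le (by linarith)
  have h3 : a ^ (p - 1) * (1 + (p - 1) * (-b / a)) ≤ (a - b) ^ (p - 1) := by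
    rw [← h1, h2]
    have := mul_le_mul_of_nonneg_left hbern (le_of_lt (Real.rpow_pos_of_pos ha (p - 1)))
    linarith
  have hap : a ^ (p - 1) * a = a ^ p := by
    rw [← Real.rpow_add_one (ne_of_gt ha)]; ring_nf
  have hap2 : a ^ (p - 2) * a = a ^ (p - 1) := by
    rw [← Real.rpow_add_one (ne_of_gt ha)]; ring_nf
  have habp : (a - b) ^ (p - 2) * (a - b) = (a - b) ^ (p - 1) := by
    rw [← Real.rpow_add_one (ne_of_gt hab)]; ring_nf
  have h4 : a ^ (p - 1) * (1 + (p - 1) * (-b / a)) = a ^ (p - 1) + (p - 1) * a ^ (p - 2) * (-b) := by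
    have : a ^ (p - 1) * (-b / a) = a ^ (p - 2) * (-b) := by
      rw [← hap2]; field_simp
    nlinarith [this]
  have h5 : a ^ (p - 1) + (p - 1) * a ^ (p - 2) * (-b) ≤ (a - b) ^ (p - 1) := by
    rw [← h4]; exact h3
  have := mul_le_mul_of_nonneg_right h5 ha.le
  rw [habp]
  nlinarith [this, hap, hap2]

theorem stmt2 (p a b : ℝ) (hp : 2 < p) (hab : a * b ≤ 0) :
    |a| ^ p - (p - 1) * |a| ^ (p - 2) * b * a ≤ |a - b| ^ (p - 2) * (a - b) * a := by
  rcases lt_trichotomy a 0 with ha | ha | ha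
  · have hb : 0 ≤ b := by nlinarith
    have h := key2 p (-a) (-b) hp (by linarith) (by linarith)
    have e1 : |a| = -a := abs_of_neg ha
    have e2 : |a - b| = -a - -b := by rw [abs_of_neg (by linarith)]; ring
    rw [e1, e2]
    nlinarith [h]
  · subst ha
    simp [Real.zero_rpow (by positivity : p ≠ 0)]
  · have hb : b ≤ 0 := by nlinarith
    have h := key2 p a b hp ha hb
    rw [abs_of_pos ha, abs_of_pos (by linarith : (0:ℝ) < a - b)]
    exact h
end

section
/- Let 1 < p < 2 and let a, b be real numbers with a·b ≤ 0. Then |a − b|^{p−2}(a − b)·a ≥ |a|^p − (p − 1)·|a − b|^{p−2}·b·a. -/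
lemma aux3 (p a b : ℝ) (hp1 : 1 < p) (hp2 : p < 2) (ha : 0 ≤ a) (hb : b ≤ 0) :
    |a| ^ p - (p - 1) * |a - b| ^ (p - 2) * b * a ≤ |a - b| ^ (p - 2) * (a - b) * a := by
  rcases eq_or_lt_of_le ha with h0 | h0
  · subst h0
    simp [Real.zero_rpow (by linarith : p ≠ 0)]
  · have hD : (0:ℝ) < a - b := by linarith
    have habs : |a| = a := abs_of_pos h0
    have habs2 : |a - b| = a - b := abs_of_pos hD
    rw [habs, habs2]
    have key : a ^ (p - 1) * (a - b) ^ (2 - p) ≤ (p - 1) * a + (2 - p) * (a - b) :=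
      Real.geom_mean_le_arith_mean2_weighted (by linarith) (by linarith) ha hD.le
        (by ring)
    have h1 : a ^ p ≤ (a - b) ^ (p - 2) * a * ((p - 1) * a + (2 - p) * (a - b)) := by
      have hmul := mul_le_mul_of_nonneg_left key
        (mul_nonneg ha (Real.rpow_nonneg hD.le (p - 2)))
      calc a ^ p = (a * (a - b) ^ (p - 2)) * (a ^ (p - 1) * (a - b) ^ (2 - p)) := by
            rw [show a * (a - b) ^ (p - 2) * (a ^ (p - 1) * (a - b) ^ (2 - p)) =
              (a ^ (p - 1) * a) * ((a - b) ^ (p - 2) * (a - b) ^ (2 - p)) by ring,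
              ← Real.rpow_add_one (ne_of_gt h0), ← Real.rpow_add hD]
            norm_num
        _ ≤ (a * (a - b) ^ (p - 2)) * ((p - 1) * a + (2 - p) * (a - b)) := hmul
        _ = (a - b) ^ (p - 2) * a * ((p - 1) * a + (2 - p) * (a - b)) := by ring
    nlinarith [h1]

theorem stmt3 (p a b : ℝ) (hp1 : 1 < p) (hp2 : p < 2) (hab : a * b ≤ 0) :
    |a| ^ p - (p - 1) * |a - b| ^ (p - 2) * b * a ≤ |a - b| ^ (p - 2) * (a - b) * a := by
  rcases eq_or_ne a 0 with rfl | ha0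
  · simp [Real.zero_rpow (by linarith : p ≠ 0)]
  rcases le_or_gt 0 a with ha | ha
  · have h0 : 0 < a := lt_of_le_of_ne ha (Ne.symm ha0)
    have hb : b ≤ 0 := by nlinarith
    exact aux3 p a b hp1 hp2 ha hb
  · have hb : 0 ≤ b := by nlinarith
    have := aux3 p (-a) (-b) hp1 hp2 (by linarith) (by linarith)
    have e1 : |-a| = |a| := abs_neg a
    have e2 : (-a - -b) = -(a - b) := by ring
    rw [e1, e2, abs_neg] at this
    nlinarith [this]
end

section
/- Let p ≥ 1, t ∈ [0,1], and let J : ℝ^N → ℝ be a nonnegative measurable function. For nonnegative measurable functions u, v : ℝ^N → ℝ, define σ_t(x) = ((1−t)v(x)^p + t u(x)^p)^{1/p}. Then ∫∫ |σ_t(x) − σ_t(y)|^p J(x−y) dx dy ≤ (1−t) ∫∫ |v(x) − v(y)|^p J(x−y) dx dy + t ∫∫ |u(x) − u(y)|^p J(x−y) dx dy. -/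
open MeasureTheory

set_option maxHeartbeats 1000000

private lemma Fsub {p s t : ℝ} (hp : 1 ≤ p) (hs : 0 ≤ s) (ht : 0 ≤ t)
    {x y x' y' : ℝ} (hx : 0 ≤ x) (hy : 0 ≤ y) (hx' : 0 ≤ x') (hy' : 0 ≤ y') :
    (s * (x + x') ^ p + t * (y + y') ^ p) ^ (1 / p) ≤
      (s * x ^ p + t * y ^ p) ^ (1 / p) + (s * x' ^ p + t * y' ^ p) ^ (1 / p) := by
  have hp0 : p ≠ 0 := by linarith
  have key := Real.Lp_add_le_of_nonneg (s := (Finset.univ : Finset (Fin 2)))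
    (f := ![s ^ (1 / p) * x, t ^ (1 / p) * y])
    (g := ![s ^ (1 / p) * x', t ^ (1 / p) * y']) hp
    (by intro i _; fin_cases i <;> simp <;> positivity)
    (by intro i _; fin_cases i <;> simp <;> positivity)
  have hsp : (s ^ (1 / p)) ^ p = s := by
    rw [one_div, Real.rpow_inv_rpow hs hp0]
  have htp : (t ^ (1 / p)) ^ p = t := by
    rw [one_div, Real.rpow_inv_rpow ht hp0]
  have expand : ∀ a b : ℝ, 0 ≤ a → 0 ≤ b →
      (s ^ (1 / p) * a) ^ p = s * a ^ p ∧ (t ^ (1 / p) * b) ^ p = t * b ^ p := by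
    intro a b ha hb
    constructor
    · rw [Real.mul_rpow (by positivity) ha, hsp]
    · rw [Real.mul_rpow (by positivity) hb, htp]
  simp only [Fin.sum_univ_two, Matrix.cons_val_zero, Matrix.cons_val_one, Matrix.head_cons] at key
  rw [← mul_add, ← mul_add] at key
  rw [(expand _ _ (by positivity) (by positivity)).1,
    (expand _ _ (by positivity) (by positivity)).2,
    (expand x y hx hy).1, (expand x y hx hy).2,
    (expand x' y' hx' hy').1, (expand x' y' hx' hy').2] at key
  exact key

private lemma Fmono {p s t : ℝ} (hp : 1 ≤ p) (hs : 0 ≤ s) (ht : 0 ≤ t)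
    {x y x' y' : ℝ} (hx : 0 ≤ x) (hy : 0 ≤ y) (hxx : x ≤ x') (hyy : y ≤ y') :
    (s * x ^ p + t * y ^ p) ^ (1 / p) ≤ (s * x' ^ p + t * y' ^ p) ^ (1 / p) := by
  apply Real.rpow_le_rpow (by positivity) _ (by positivity)
  have h1 : x ^ p ≤ x' ^ p := Real.rpow_le_rpow hx hxx (by linarith)
  have h2 : y ^ p ≤ y' ^ p := Real.rpow_le_rpow hy hyy (by linarith)
  have := mul_le_mul_of_nonneg_left h1 hs
  have := mul_le_mul_of_nonneg_left h2 ht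
  linarith

private lemma key_pointwise {p s t a b c d : ℝ} (hp : 1 ≤ p) (hs : 0 ≤ s) (ht : 0 ≤ t)
    (ha : 0 ≤ a) (hb : 0 ≤ b) (hc : 0 ≤ c) (hd : 0 ≤ d) :
    |(s * a ^ p + t * c ^ p) ^ (1 / p) - (s * b ^ p + t * d ^ p) ^ (1 / p)| ^ p ≤
      s * |a - b| ^ p + t * |c - d| ^ p := by
  have hp0 : p ≠ 0 := by linarith
  set D : ℝ := (s * |a - b| ^ p + t * |c - d| ^ p) ^ (1 / p) with hD
  have habs : |(s * a ^ p + t * c ^ p) ^ (1 / p) - (s * b ^ p + t * d ^ p) ^ (1 / p)| ≤ D := by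
    rw [abs_sub_le_iff]
    constructor
    · have h1 : (s * a ^ p + t * c ^ p) ^ (1 / p) ≤
          (s * (b + |a - b|) ^ p + t * (d + |c - d|) ^ p) ^ (1 / p) :=
        Fmono hp hs ht ha hc (by cases abs_cases (a - b) <;> linarith)
          (by cases abs_cases (c - d) <;> linarith)
      have h2 := Fsub hp hs ht hb hd (abs_nonneg (a - b)) (abs_nonneg (c - d))
      linarith
    · have h1 : (s * b ^ p + t * d ^ p) ^ (1 / p) ≤
          (s * (a + |a - b|) ^ p + t * (c + |c - d|) ^ p) ^ (1 / p) :=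
        Fmono hp hs ht hb hd (by cases abs_cases (a - b) <;> linarith)
          (by cases abs_cases (c - d) <;> linarith)
      have h2 := Fsub hp hs ht ha hc (abs_nonneg (a - b)) (abs_nonneg (c - d))
      linarith
  calc |(s * a ^ p + t * c ^ p) ^ (1 / p) - (s * b ^ p + t * d ^ p) ^ (1 / p)| ^ p
      ≤ D ^ p := Real.rpow_le_rpow (abs_nonneg _) habs (by linarith)
    _ = s * |a - b| ^ p + t * |c - d| ^ p := by
        rw [hD, one_div, Real.rpow_inv_rpow (by positivity) hp0]

theorem stmt5 (N : ℕ) (p t : ℝ) (hp : 1 ≤ p) (ht : t ∈ Set.Icc (0 : ℝ) 1)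
    (J u v : EuclideanSpace ℝ (Fin N) → ℝ)
    (hJm : Measurable J) (hJ0 : ∀ x, 0 ≤ J x)
    (hum : Measurable u) (hu0 : ∀ x, 0 ≤ u x)
    (hvm : Measurable v) (hv0 : ∀ x, 0 ≤ v x) :
    (∫⁻ x, ∫⁻ y, ENNReal.ofReal
        (|((1 - t) * v x ^ p + t * u x ^ p) ^ (1 / p) -
            ((1 - t) * v y ^ p + t * u y ^ p) ^ (1 / p)| ^ p * J (x - y))) ≤
      ENNReal.ofReal (1 - t) *
          (∫⁻ x, ∫⁻ y, ENNReal.ofReal (|v x - v y| ^ p * J (x - y))) +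
        ENNReal.ofReal t *
          (∫⁻ x, ∫⁻ y, ENNReal.ofReal (|u x - u y| ^ p * J (x - y))) := by
  obtain ⟨ht0, ht1⟩ := ht
  have hs : (0:ℝ) ≤ 1 - t := by linarith
  -- pointwise bound in ℝ≥0∞
  have hpt : ∀ x y : EuclideanSpace ℝ (Fin N),
      ENNReal.ofReal
        (|((1 - t) * v x ^ p + t * u x ^ p) ^ (1 / p) -
            ((1 - t) * v y ^ p + t * u y ^ p) ^ (1 / p)| ^ p * J (x - y)) ≤
      ENNReal.ofReal (1 - t) * ENNReal.ofReal (|v x - v y| ^ p * J (x - y)) +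
        ENNReal.ofReal t * ENNReal.ofReal (|u x - u y| ^ p * J (x - y)) := by
    intro x y
    rw [← ENNReal.ofReal_mul hs, ← ENNReal.ofReal_mul ht0,
      ← ENNReal.ofReal_add (mul_nonneg hs (mul_nonneg (by positivity) (hJ0 _))) (mul_nonneg ht0 (mul_nonneg (by positivity) (hJ0 _)))]
    apply ENNReal.ofReal_le_ofReal
    have := key_pointwise (a := v x) (b := v y) (c := u x) (d := u y) hp hs ht0
      (hv0 x) (hv0 y) (hu0 x) (hu0 y)
    calc |((1 - t) * v x ^ p + t * u x ^ p) ^ (1 / p) -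
            ((1 - t) * v y ^ p + t * u y ^ p) ^ (1 / p)| ^ p * J (x - y)
        ≤ ((1 - t) * |v x - v y| ^ p + t * |u x - u y| ^ p) * J (x - y) := by
          apply mul_le_mul_of_nonneg_right this (hJ0 _)
      _ = (1 - t) * (|v x - v y| ^ p * J (x - y)) + t * (|u x - u y| ^ p * J (x - y)) := by ring
  -- measurability of the two RHS integrands
  have hmv : Measurable fun q : EuclideanSpace ℝ (Fin N) × EuclideanSpace ℝ (Fin N) =>
      ENNReal.ofReal (|v q.1 - v q.2| ^ p * J (q.1 - q.2)) := by
    apply ENNReal.measurable_ofReal.comp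
    exact (((Real.continuous_rpow_const (by linarith : (0:ℝ) ≤ p)).measurable.comp
      ((hvm.comp measurable_fst).sub (hvm.comp measurable_snd)).abs).mul
      (hJm.comp (measurable_fst.sub measurable_snd)))
  have hmu : Measurable fun q : EuclideanSpace ℝ (Fin N) × EuclideanSpace ℝ (Fin N) =>
      ENNReal.ofReal (|u q.1 - u q.2| ^ p * J (q.1 - q.2)) := by
    apply ENNReal.measurable_ofReal.comp
    exact (((Real.continuous_rpow_const (by linarith : (0:ℝ) ≤ p)).measurable.comp
      ((hum.comp measurable_fst).sub (hum.comp measurable_snd)).abs).mul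
      (hJm.comp (measurable_fst.sub measurable_snd)))
  have hGv : Measurable fun x : EuclideanSpace ℝ (Fin N) =>
      ∫⁻ y, ENNReal.ofReal (|v x - v y| ^ p * J (x - y)) :=
    hmv.lintegral_prod_right'
  have hGu : Measurable fun x : EuclideanSpace ℝ (Fin N) =>
      ∫⁻ y, ENNReal.ofReal (|u x - u y| ^ p * J (x - y)) :=
    hmu.lintegral_prod_right'
  calc (∫⁻ x, ∫⁻ y, ENNReal.ofReal
        (|((1 - t) * v x ^ p + t * u x ^ p) ^ (1 / p) -
            ((1 - t) * v y ^ p + t * u y ^ p) ^ (1 / p)| ^ p * J (x - y)))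
      ≤ ∫⁻ x, ∫⁻ y, (ENNReal.ofReal (1 - t) * ENNReal.ofReal (|v x - v y| ^ p * J (x - y)) +
          ENNReal.ofReal t * ENNReal.ofReal (|u x - u y| ^ p * J (x - y))) := by
        refine lintegral_mono fun x => lintegral_mono fun y => hpt x y
    _ = ∫⁻ x, (ENNReal.ofReal (1 - t) * ∫⁻ y, ENNReal.ofReal (|v x - v y| ^ p * J (x - y))) +
          ENNReal.ofReal t * ∫⁻ y, ENNReal.ofReal (|u x - u y| ^ p * J (x - y)) := by
        refine lintegral_congr fun x => ?_
        rw [lintegral_add_left]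
        · rw [lintegral_const_mul' _ _ ENNReal.ofReal_ne_top,
            lintegral_const_mul' _ _ ENNReal.ofReal_ne_top]
        · exact ((hmv.comp measurable_prodMk_left)).const_mul _
    _ = ENNReal.ofReal (1 - t) *
          (∫⁻ x, ∫⁻ y, ENNReal.ofReal (|v x - v y| ^ p * J (x - y))) +
        ENNReal.ofReal t *
          (∫⁻ x, ∫⁻ y, ENNReal.ofReal (|u x - u y| ^ p * J (x - y))) := by
        rw [lintegral_add_left (hGv.const_mul _),
          lintegral_const_mul' _ _ ENNReal.ofReal_ne_top,
          lintegral_const_mul' _ _ ENNReal.ofReal_ne_top]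
end

section
/- Let p ≥ 2 and let a, b be real numbers. Then 2^{p−2}·(|a|^{p−2}a − |b|^{p−2}b)·(a − b) ≥ |a − b|^p. -/
private lemma aux1 {q x y : ℝ} (hq : 1 ≤ q) (hx : 0 ≤ x) (hy : 0 ≤ y) :
    x ^ q + y ^ q ≤ (x + y) ^ q := by
  have h := NNReal.coe_le_coe.mpr (NNReal.add_rpow_le_rpow_add x.toNNReal y.toNNReal hq)
  push_cast [NNReal.coe_rpow, Real.coe_toNNReal x hx, Real.coe_toNNReal y hy] at h
  exact h

private lemma aux2 {q x y : ℝ} (hq : 1 ≤ q) (hx : 0 ≤ x) (hy : 0 ≤ y) :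
    (x + y) ^ q ≤ 2 ^ (q - 1) * (x ^ q + y ^ q) := by
  have h := NNReal.coe_le_coe.mpr (NNReal.rpow_add_le_mul_rpow_add_rpow x.toNNReal y.toNNReal hq)
  push_cast [NNReal.coe_rpow, Real.coe_toNNReal x hx, Real.coe_toNNReal y hy] at h
  exact h

private lemma pow_split {p x : ℝ} (hp : 2 ≤ p) (hx : 0 ≤ x) :
    x ^ (p - 2) * x = x ^ (p - 1) := by
  rcases eq_or_lt_of_le hx with h | h
  · rw [← h, mul_zero, Real.zero_rpow (by intro hc; linarith : p - 1 ≠ 0)]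
  · rw [show p - 1 = (p - 2) + 1 by ring, Real.rpow_add h, Real.rpow_one]

private lemma key (p a b : ℝ) (hp : 2 ≤ p) (h1 : b ≤ a) (h2 : 0 ≤ a + b) :
    |a - b| ^ p ≤ (2 : ℝ) ^ (p - 2) * ((|a| ^ (p - 2) * a - |b| ^ (p - 2) * b) * (a - b)) := by
  have ha : 0 ≤ a := by linarith
  have hq : 1 ≤ p - 1 := by linarith
  rcases eq_or_lt_of_le h1 with h | h
  · subst h; simp [Real.zero_rpow (by linarith : p ≠ 0)]
  have ht : 0 < a - b := by linarith
  rw [abs_of_nonneg ha, abs_of_pos ht,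
    show p = (p - 1) + 1 by ring, Real.rpow_add ht, Real.rpow_one,
    show p - 1 + 1 - 2 = p - 2 by ring]
  have h2p : (1 : ℝ) ≤ 2 ^ (p - 2) := by
    calc (1 : ℝ) = 2 ^ (0 : ℝ) := by norm_num
    _ ≤ 2 ^ (p - 2) := Real.rpow_le_rpow_of_exponent_le one_le_two (by linarith)
  have key2 : (a - b) ^ (p - 1) ≤ 2 ^ (p - 2) * (a ^ (p - 2) * a - |b| ^ (p - 2) * b) := by
    rcases le_or_gt 0 b with hb | hb
    · rw [abs_of_nonneg hb, pow_split hp ha, pow_split hp hb]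
      have h3 := aux1 hq hb (le_of_lt ht)
      rw [show b + (a - b) = a by ring] at h3
      nlinarith [Real.rpow_nonneg (le_of_lt ht) (p - 1)]
    · rw [abs_of_neg hb, pow_split hp ha]
      have hnb : 0 ≤ -b := by linarith
      have h3 := aux2 hq ha hnb
      rw [show a + -b = a - b by ring, show p - 1 - 1 = p - 2 by ring] at h3
      calc (a - b) ^ (p - 1) ≤ 2 ^ (p - 2) * (a ^ (p - 1) + (-b) ^ (p - 1)) := h3
      _ = 2 ^ (p - 2) * (a ^ (p - 1) - (-b) ^ (p - 2) * b) := by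
          rw [← pow_split hp hnb]; ring
  calc (a - b) ^ (p - 1) * (a - b)
      ≤ (2 ^ (p - 2) * (a ^ (p - 2) * a - |b| ^ (p - 2) * b)) * (a - b) :=
        mul_le_mul_of_nonneg_right key2 (le_of_lt ht)
    _ = 2 ^ (p - 2) * ((a ^ (p - 2) * a - |b| ^ (p - 2) * b) * (a - b)) := by ring

theorem stmt7 (p a b : ℝ) (hp : 2 ≤ p) :
    |a - b| ^ p ≤ (2 : ℝ) ^ (p - 2) * ((|a| ^ (p - 2) * a - |b| ^ (p - 2) * b) * (a - b)) := by
  have main : ∀ x y : ℝ, y ≤ x →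
      |x - y| ^ p ≤ (2 : ℝ) ^ (p - 2) * ((|x| ^ (p - 2) * x - |y| ^ (p - 2) * y) * (x - y)) := by
    intro x y hxy
    rcases le_or_gt 0 (x + y) with hs | hs
    · exact key p x y hp hxy hs
    · have h := key p (-y) (-x) hp (by linarith) (by linarith)
      rw [abs_neg, abs_neg, show -y - -x = x - y by ring] at h
      calc |x - y| ^ p ≤ 2 ^ (p - 2) * ((|y| ^ (p - 2) * -y - |x| ^ (p - 2) * -x) * (x - y)) := h
        _ = 2 ^ (p - 2) * ((|x| ^ (p - 2) * x - |y| ^ (p - 2) * y) * (x - y)) := by ring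
  rcases le_total b a with h | h
  · exact main a b h
  · have := main b a h
    rw [show b - a = -(a - b) by ring, abs_neg] at this
    calc |a - b| ^ p ≤ 2 ^ (p - 2) * ((|b| ^ (p - 2) * b - |a| ^ (p - 2) * a) * -(a - b)) := this
      _ = 2 ^ (p - 2) * ((|a| ^ (p - 2) * a - |b| ^ (p - 2) * b) * (a - b)) := by ring
end

section
/- Let 1 < r < 2. There exists a constant C_r > 0 such that for all real numbers a, b: |a − b|^r ≤ C_r · ((|a|^{r−2}a − |b|^{r−2}b)·(a − b))^{r/2} · (|a|^r + |b|^r)^{(2−r)/2}. -/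
open Real

lemma aux_rpow_add_le {x y s : ℝ} (hx : 0 ≤ x) (hy : 0 ≤ y) (hs : 0 ≤ s) (hs1 : s ≤ 1) :
    (x + y) ^ s ≤ x ^ s + y ^ s := by
  have h := NNReal.rpow_add_le_add_rpow (⟨x, hx⟩ : NNReal) ⟨y, hy⟩ hs hs1
  have := NNReal.coe_le_coe.mpr h
  push_cast [NNReal.coe_rpow] at this
  exact this

lemma aux_mul_self {r t : ℝ} (hr1 : 1 < r) (ht : 0 ≤ t) : t ^ (r-2) * t = t ^ (r-1) := by
  rcases eq_or_lt_of_le ht with h0 | h0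
  · obtain rfl : t = 0 := h0.symm
    rw [mul_zero, Real.zero_rpow (show r - 1 ≠ 0 by linarith)]
  · rw [show r - 1 = (r-2) + 1 by ring, Real.rpow_add h0, Real.rpow_one]

lemma keyA {r : ℝ} (hr1 : 1 < r) (hr2 : r < 2) {a b : ℝ} (hb : 0 ≤ b) (hba : b ≤ a) :
    (r-1) * (a-b) * (a+b) ^ (r-2) ≤ a ^ (r-1) - b ^ (r-1) := by
  rcases eq_or_lt_of_le (hb.trans hba) with h0 | ha
  · have ha0 : a = 0 := h0.symm
    have hb0 : b = 0 := le_antisymm (ha0 ▸ hba) hb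
    simp [ha0, hb0, Real.zero_rpow (show r - 1 ≠ 0 by linarith)]
  · have hber : (b/a) ^ (r-1) * 1 ^ (2-r) ≤ (r-1) * (b/a) + (2-r) * 1 :=
      Real.geom_mean_le_arith_mean2_weighted (by linarith) (by linarith)
        (div_nonneg hb ha.le) zero_le_one (by ring)
    rw [Real.one_rpow, mul_one, mul_one] at hber
    have hpow : a ^ (r-1) = a ^ (r-2) * a := by
      rw [show r - 1 = (r-2) + 1 by ring, Real.rpow_add ha, Real.rpow_one]
    have hdiv : (b/a) ^ (r-1) = b ^ (r-1) / a ^ (r-1) := Real.div_rpow hb ha.le _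
    have hapos : 0 < a ^ (r-1) := Real.rpow_pos_of_pos ha _
    have hmul : b ^ (r-1) ≤ (r-1) * (b * a ^ (r-2)) + (2-r) * a ^ (r-1) := by
      have h2 : (b/a) ^ (r-1) * a ^ (r-1) ≤ ((r-1) * (b/a) + (2-r)) * a ^ (r-1) :=
        mul_le_mul_of_nonneg_right hber hapos.le
      rw [hdiv, div_mul_cancel₀ _ (ne_of_gt hapos)] at h2
      have e : (b/a) * a ^ (r-1) = b * a ^ (r-2) := by
        rw [hpow]; field_simp
      calc b ^ (r-1) ≤ ((r-1) * (b/a) + (2-r)) * a ^ (r-1) := h2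
        _ = (r-1) * ((b/a) * a ^ (r-1)) + (2-r) * a ^ (r-1) := by ring
        _ = (r-1) * (b * a ^ (r-2)) + (2-r) * a ^ (r-1) := by rw [e]
    have hmono : (a+b) ^ (r-2) ≤ a ^ (r-2) :=
      Real.rpow_le_rpow_of_nonpos ha (by linarith) (by linarith)
    have h3 : (r-1) * (a-b) * (a+b) ^ (r-2) ≤ (r-1) * (a-b) * a ^ (r-2) :=
      mul_le_mul_of_nonneg_left hmono (by nlinarith)
    nlinarith [h3, hmul, hpow]

-- key monotonicity lemma, case b ≤ a
lemma keyK' {r : ℝ} (hr1 : 1 < r) (hr2 : r < 2) {a b : ℝ} (hba : b ≤ a) :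
    (r-1) * (a-b)^2 * (|a|+|b|) ^ (r-2) ≤ (|a| ^ (r-2) * a - |b| ^ (r-2) * b) * (a-b) := by
  rcases le_or_gt 0 b with hb | hb
  · -- 0 ≤ b ≤ a
    have ha : 0 ≤ a := hb.trans hba
    rw [abs_of_nonneg ha, abs_of_nonneg hb, aux_mul_self hr1 ha, aux_mul_self hr1 hb]
    have := mul_le_mul_of_nonneg_right (keyA hr1 hr2 hb hba) (sub_nonneg.mpr hba)
    nlinarith [this]
  · rcases le_or_gt 0 a with ha | ha
    · -- b < 0 ≤ a, mixed signs
      rw [abs_of_nonneg ha, abs_of_neg hb]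
      have hnb : (0:ℝ) ≤ -b := by linarith
      have e1 : (-b) ^ (r-2) * b = -((-b) ^ (r-1)) := by
        rw [← aux_mul_self hr1 hnb]; ring
      rw [aux_mul_self hr1 ha, e1]
      have hxy : 0 < a + -b := by linarith
      have e : (a + -b) ^ (r-2) * (a + -b) = (a + -b) ^ (r-1) := aux_mul_self hr1 (le_of_lt hxy)
      have h1 : (a + -b) ^ (r-1) ≤ a ^ (r-1) + (-b) ^ (r-1) :=
        aux_rpow_add_le ha hnb (by linarith) (by linarith)
      have han : 0 ≤ a ^ (r-1) := Real.rpow_nonneg ha _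
      have hbn : 0 ≤ (-b) ^ (r-1) := Real.rpow_nonneg hnb _
      calc (r-1) * (a-b)^2 * (a + -b) ^ (r-2)
          = (r-1) * ((a + -b) ^ (r-2) * (a + -b)) * (a + -b) := by ring
        _ = (r-1) * (a + -b) ^ (r-1) * (a + -b) := by rw [e]
        _ ≤ 1 * (a ^ (r-1) + (-b) ^ (r-1)) * (a + -b) := by
            apply mul_le_mul_of_nonneg_right _ hxy.le
            exact mul_le_mul (by linarith) h1 (Real.rpow_nonneg (le_of_lt hxy) _) zero_le_one
        _ = (a ^ (r-1) - -((-b) ^ (r-1))) * (a - b) := by ring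
    · -- b ≤ a < 0
      have hna : (0:ℝ) ≤ -a := by linarith
      have hnb : (0:ℝ) ≤ -b := by linarith
      rw [abs_of_neg ha, abs_of_neg hb]
      have e1 : (-a) ^ (r-2) * a = -((-a) ^ (r-1)) := by
        rw [← aux_mul_self hr1 hna]; ring
      have e2 : (-b) ^ (r-2) * b = -((-b) ^ (r-1)) := by
        rw [← aux_mul_self hr1 hnb]; ring
      rw [e1, e2]
      have h := mul_le_mul_of_nonneg_right
        (keyA hr1 hr2 (a := -b) (b := -a) hna (by linarith)) (sub_nonneg.mpr hba)
      have e3 : -b + -a = -a + -b := by ring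
      rw [e3] at h
      nlinarith [h]

lemma keyK {r : ℝ} (hr1 : 1 < r) (hr2 : r < 2) (a b : ℝ) :
    (r-1) * (a-b)^2 * (|a|+|b|) ^ (r-2) ≤ (|a| ^ (r-2) * a - |b| ^ (r-2) * b) * (a-b) := by
  rcases le_total b a with h | h
  · exact keyK' hr1 hr2 h
  · have h2 := keyK' hr1 hr2 h
    have e1 : (b-a)^2 = (a-b)^2 := by ring
    have e2 : (|b| ^ (r-2) * b - |a| ^ (r-2) * a) * (b-a)
        = (|a| ^ (r-2) * a - |b| ^ (r-2) * b) * (a-b) := by ring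
    rw [e1, e2, add_comm |b| |a|] at h2
    exact h2

theorem stmt8 (r : ℝ) (hr1 : 1 < r) (hr2 : r < 2) :
    ∃ C : ℝ, 0 < C ∧ ∀ a b : ℝ,
      |a - b| ^ r ≤ C * ((|a| ^ (r - 2) * a - |b| ^ (r - 2) * b) * (a - b)) ^ (r / 2) *
        (|a| ^ r + |b| ^ r) ^ ((2 - r) / 2) := by
  have hr0 : (0:ℝ) < r - 1 := by linarith
  have hc1 : (0:ℝ) < (r-1) ^ (r/2) := Real.rpow_pos_of_pos hr0 _
  have hc2 : (0:ℝ) < ((2:ℝ) ^ r) ^ ((2-r)/2) :=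
    Real.rpow_pos_of_pos (Real.rpow_pos_of_pos two_pos _) _
  refine ⟨((r-1) ^ (r/2))⁻¹ * ((2:ℝ) ^ r) ^ ((2-r)/2), by positivity, ?_⟩
  intro a b
  set C := ((r-1) ^ (r/2))⁻¹ * ((2:ℝ) ^ r) ^ ((2-r)/2) with hC
  rcases eq_or_ne a b with rfl | hab
  · simp [Real.zero_rpow (show r ≠ 0 by linarith), Real.zero_rpow (show r/2 ≠ 0 by positivity)]
  · set x := |a| + |b| with hx
    have hxpos : 0 < x := by
      rcases eq_or_lt_of_le (add_nonneg (abs_nonneg a) (abs_nonneg b)) with h0 | h0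
      · exfalso; apply hab
        have : |a| = 0 ∧ |b| = 0 := by constructor <;> nlinarith [abs_nonneg a, abs_nonneg b]
        rw [abs_eq_zero.mp this.1, abs_eq_zero.mp this.2]
      · exact h0
    set D := (|a| ^ (r - 2) * a - |b| ^ (r - 2) * b) * (a - b) with hD
    set S := |a| ^ r + |b| ^ r with hS
    have hK := keyK hr1 hr2 a b
    have hL0 : (0:ℝ) ≤ (r-1) * (a-b)^2 * x ^ (r-2) := by positivity
    have hDnn : 0 ≤ D := le_trans hL0 hK
    -- step 1 : lower bound on D ^ (r/2)
    have h1 : ((r-1) * (a-b)^2 * x ^ (r-2)) ^ (r/2) ≤ D ^ (r/2) :=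
      Real.rpow_le_rpow hL0 hK (by positivity)
    have hexp1 : ((r-1) * (a-b)^2 * x ^ (r-2)) ^ (r/2)
        = (r-1) ^ (r/2) * |a-b| ^ r * x ^ ((r-2)*(r/2)) := by
      have habs : (a-b)^2 = |a-b| ^ (2:ℝ) := by
        rw [show ((2:ℝ)) = ((2:ℕ):ℝ) by norm_num, Real.rpow_natCast, sq_abs]
      rw [habs, Real.mul_rpow (by positivity) (by positivity),
          Real.mul_rpow (by positivity) (by positivity),
          ← Real.rpow_mul (abs_nonneg _), show (2:ℝ)*(r/2) = r by ring,
          ← Real.rpow_mul hxpos.le]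
    -- step 2 : lower bound on S ^ ((2-r)/2)
    have hS2 : (x/2) ^ r ≤ S := by
      have hx2 : 0 ≤ x/2 := by positivity
      rcases le_total |a| |b| with h | h
      · have : (x/2) ^ r ≤ |b| ^ r :=
          Real.rpow_le_rpow hx2 (by rw [hx]; linarith) (by linarith)
        have hna : 0 ≤ |a| ^ r := Real.rpow_nonneg (abs_nonneg _) _
        rw [hS]; linarith
      · have : (x/2) ^ r ≤ |a| ^ r :=
          Real.rpow_le_rpow hx2 (by rw [hx]; linarith) (by linarith)
        have hnb : 0 ≤ |b| ^ r := Real.rpow_nonneg (abs_nonneg _) _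
        rw [hS]; linarith
    have h2 : ((x/2) ^ r) ^ ((2-r)/2) ≤ S ^ ((2-r)/2) :=
      Real.rpow_le_rpow (Real.rpow_nonneg (by positivity) _) hS2 (by linarith)
    have hexp2 : ((x/2) ^ r) ^ ((2-r)/2) = x ^ (r*((2-r)/2)) / (2:ℝ) ^ (r*((2-r)/2)) := by
      rw [← Real.rpow_mul (by positivity), Real.div_rpow hxpos.le (by norm_num)]
    -- combine
    have hmul : ((r-1) ^ (r/2) * |a-b| ^ r * x ^ ((r-2)*(r/2)))
          * (x ^ (r*((2-r)/2)) / (2:ℝ) ^ (r*((2-r)/2))) ≤ D ^ (r/2) * S ^ ((2-r)/2) := by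
      rw [← hexp1, ← hexp2]
      exact mul_le_mul h1 h2 (Real.rpow_nonneg (Real.rpow_nonneg (by positivity) _) _)
        (Real.rpow_nonneg hDnn _)
    have hxx : x ^ ((r-2)*(r/2)) * x ^ (r*((2-r)/2)) = 1 := by
      rw [← Real.rpow_add hxpos, show (r-2)*(r/2) + r*((2-r)/2) = 0 by ring, Real.rpow_zero]
    have h2e : ((2:ℝ) ^ r) ^ ((2-r)/2) = (2:ℝ) ^ (r*((2-r)/2)) := by
      rw [← Real.rpow_mul (by norm_num)]
    have h2pos : (0:ℝ) < (2:ℝ) ^ (r*((2-r)/2)) := Real.rpow_pos_of_pos two_pos _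
    have hkey : C * (((r-1) ^ (r/2) * |a-b| ^ r * x ^ ((r-2)*(r/2)))
            * (x ^ (r*((2-r)/2)) / (2:ℝ) ^ (r*((2-r)/2)))) = |a - b| ^ r := by
      rw [hC, h2e]
      have step : ((r-1) ^ (r/2))⁻¹ * (2:ℝ) ^ (r*((2-r)/2)) * (((r-1) ^ (r/2) * |a-b| ^ r * x ^ ((r-2)*(r/2)))
            * (x ^ (r*((2-r)/2)) / (2:ℝ) ^ (r*((2-r)/2))))
          = (((r-1) ^ (r/2))⁻¹ * (r-1) ^ (r/2)) * ((2:ℝ) ^ (r*((2-r)/2)) / (2:ℝ) ^ (r*((2-r)/2)))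
            * (x ^ ((r-2)*(r/2)) * x ^ (r*((2-r)/2))) * |a-b| ^ r := by ring
      rw [step, inv_mul_cancel₀ hc1.ne', div_self h2pos.ne', hxx]
      ring
    calc |a - b| ^ r
        = C * (((r-1) ^ (r/2) * |a-b| ^ r * x ^ ((r-2)*(r/2)))
            * (x ^ (r*((2-r)/2)) / (2:ℝ) ^ (r*((2-r)/2)))) := hkey.symm
      _ ≤ C * (D ^ (r/2) * S ^ ((2-r)/2)) := by
          apply mul_le_mul_of_nonneg_left hmul
          positivity
      _ = C * D ^ (r/2) * S ^ ((2-r)/2) := by ring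
end
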